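/- Let n ≥ 1, 2 < p < ∞, let Ω ⊂ ℝⁿ be a bounded open set, T > 0, and ε > 0. Suppose u, v : ℝⁿ × ℝ → ℝ are bounded Borel measurable functions that both satisfy the DPP with parameter ε at every point (x,t) ∈ Ω × (0,T], and that u(y,s) ≤ v(y,s) for every point (y,s) ∉ Ω × (0,T]. Then u ≤ v everywhere on ℝⁿ × ℝ (comparison principle). -/

import Mathlib

open MeasureTheory Metric Set

/-- `u` satisfies the dynamic programming principle with parameter `ε` at `(x,t)`:
`u(x,t) = β ⨍_{B_ε(x)} u(y,t−ε²) dy + α sup_{|σ|=1} (u(x+εσ,t−ε²)+u(x−εσ,t−ε²))/2`,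
where `α = (p−2)/(p+n)`, `β = (n+2)/(p+n)`. -/
def SatisfiesDPPAt (n : ℕ) (p ε : ℝ) (u : EuclideanSpace ℝ (Fin n) × ℝ → ℝ)
    (x : EuclideanSpace ℝ (Fin n)) (t : ℝ) : Prop :=
  u (x, t) = (((n : ℝ) + 2) / (p + n)) * (⨍ y in ball x ε, u (y, t - ε ^ 2)) +
    ((p - 2) / (p + n)) *
      (⨆ σ : sphere (0 : EuclideanSpace ℝ (Fin n)) 1,
        (u (x + ε • (σ : EuclideanSpace ℝ (Fin n)), t - ε ^ 2) +
         u (x - ε • (σ : EuclideanSpace ℝ (Fin n)), t - ε ^ 2)) / 2)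

/-- **Comparison principle for the DPP**: two bounded Borel functions satisfying the DPP in
`Ω × (0,T]` with ordered boundary values outside `Ω × (0,T]` are ordered everywhere (comparison principle). -/
theorem dpp_comparison
    (n : ℕ) (hn : 1 ≤ n) (p : ℝ) (hp : 2 < p)
    (Ω : Set (EuclideanSpace ℝ (Fin n))) (hΩo : IsOpen Ω)
    (hΩb : Bornology.IsBounded Ω) (T : ℝ) (hT : 0 < T) (ε : ℝ) (hε : 0 < ε)
    (u v : EuclideanSpace ℝ (Fin n) × ℝ → ℝ)
    (hu_bd : ∃ M : ℝ, ∀ q, |u q| ≤ M) (hv_bd : ∃ M : ℝ, ∀ q, |v q| ≤ M)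
    (hu_meas : Measurable u) (hv_meas : Measurable v)
    (hu_dpp : ∀ x ∈ Ω, ∀ t ∈ Ioc (0 : ℝ) T, SatisfiesDPPAt n p ε u x t)
    (hv_dpp : ∀ x ∈ Ω, ∀ t ∈ Ioc (0 : ℝ) T, SatisfiesDPPAt n p ε v x t)
    (hbdry : ∀ q : EuclideanSpace ℝ (Fin n) × ℝ, q ∉ Ω ×ˢ Ioc (0 : ℝ) T → u q ≤ v q) :
    ∀ q : EuclideanSpace ℝ (Fin n) × ℝ, u q ≤ v q := by
  obtain ⟨Mu, hMu⟩ := hu_bd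
  obtain ⟨Mv, hMv⟩ := hv_bd
  have hεsq : (0:ℝ) < ε ^ 2 := by positivity
  have hn0 : (0:ℝ) ≤ n := Nat.cast_nonneg n
  have hpn : (0:ℝ) < p + n := by linarith
  have hβ : 0 ≤ ((n:ℝ) + 2) / (p + n) := by positivity
  have hα : 0 ≤ (p - 2) / (p + n) := div_nonneg (by linarith) hpn.le
  haveI hsph : Nonempty (sphere (0 : EuclideanSpace ℝ (Fin n)) 1) := by
    refine ⟨⟨EuclideanSpace.single ⟨0, hn⟩ (1:ℝ), ?_⟩⟩
    simp [mem_sphere_iff_norm, EuclideanSpace.norm_single]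
  have key : ∀ k : ℕ, ∀ q : EuclideanSpace ℝ (Fin n) × ℝ, q.2 ≤ k * ε ^ 2 → u q ≤ v q := by
    intro k
    induction k with
    | zero =>
      intro q hq
      apply hbdry
      intro hmem
      have := hmem.2.1
      simp at hq
      linarith
    | succ k ih =>
      rintro ⟨x, t⟩ ht
      by_cases hmem : (x, t) ∈ Ω ×ˢ Ioc (0 : ℝ) T
      · obtain ⟨hx, htT⟩ := hmem
        have hdu := hu_dpp x hx t htT
        have hdv := hv_dpp x hx t htT
        rw [SatisfiesDPPAt] at hdu hdv
        have hs : t - ε ^ 2 ≤ k * ε ^ 2 := by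
          push_cast at ht; linarith
        have hle : ∀ y, u (y, t - ε ^ 2) ≤ v (y, t - ε ^ 2) := fun y => ih (y, t - ε ^ 2) hs
        have hmu : Measurable fun y => u (y, t - ε ^ 2) :=
          hu_meas.comp (measurable_id.prodMk measurable_const)
        have hmv : Measurable fun y => v (y, t - ε ^ 2) :=
          hv_meas.comp (measurable_id.prodMk measurable_const)
        have hiu : IntegrableOn (fun y => u (y, t - ε ^ 2)) (ball x ε) := by
          refine Integrable.mono' (g := fun _ => Mu) ?_ hmu.aestronglyMeasurable ?_
          · exact integrableOn_const measure_ball_lt_top.ne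
          · filter_upwards with y using hMu _
        have hiv : IntegrableOn (fun y => v (y, t - ε ^ 2)) (ball x ε) := by
          refine Integrable.mono' (g := fun _ => Mv) ?_ hmv.aestronglyMeasurable ?_
          · exact integrableOn_const measure_ball_lt_top.ne
          · filter_upwards with y using hMv _
        have havg : (⨍ y in ball x ε, u (y, t - ε ^ 2)) ≤ ⨍ y in ball x ε, v (y, t - ε ^ 2) := by
          rw [setAverage_eq, setAverage_eq, smul_eq_mul, smul_eq_mul]
          refine mul_le_mul_of_nonneg_left ?_ (by positivity)
          exact setIntegral_mono_on hiu hiv measurableSet_ball fun y _ => hle y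
        have hsup :
            (⨆ σ : sphere (0 : EuclideanSpace ℝ (Fin n)) 1,
              (u (x + ε • (σ : EuclideanSpace ℝ (Fin n)), t - ε ^ 2) +
               u (x - ε • (σ : EuclideanSpace ℝ (Fin n)), t - ε ^ 2)) / 2) ≤
            ⨆ σ : sphere (0 : EuclideanSpace ℝ (Fin n)) 1,
              (v (x + ε • (σ : EuclideanSpace ℝ (Fin n)), t - ε ^ 2) +
               v (x - ε • (σ : EuclideanSpace ℝ (Fin n)), t - ε ^ 2)) / 2 := by
          refine ciSup_mono ⟨Mv, ?_⟩ fun σ => ?_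
          · rintro r ⟨σ, rfl⟩
            have h1 := abs_le.1 (hMv (x + ε • (σ : EuclideanSpace ℝ (Fin n)), t - ε ^ 2))
            have h2 := abs_le.1 (hMv (x - ε • (σ : EuclideanSpace ℝ (Fin n)), t - ε ^ 2))
            simp only
            linarith [h1.2, h2.2]
          · have h1 := hle (x + ε • (σ : EuclideanSpace ℝ (Fin n)))
            have h2 := hle (x - ε • (σ : EuclideanSpace ℝ (Fin n)))
            linarith
        calc u (x, t) = _ := hdu
          _ ≤ _ := add_le_add (mul_le_mul_of_nonneg_left havg hβ)
                (mul_le_mul_of_nonneg_left hsup hα)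
          _ = v (x, t) := hdv.symm
      · exact hbdry _ hmem
  intro q
  obtain ⟨k, hk⟩ := exists_nat_ge (q.2 / ε ^ 2)
  exact key k q ((div_le_iff₀ hεsq).1 hk)
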